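/- Let X be a real Banach space and Ω ⊊ X a convex domain. Then every closed quasihyperbolic ball B_k(x, r) = {y ∈ Ω : k_Ω(x, y) ≤ r}, for x ∈ Ω and r > 0, is a convex set. -/

import Mathlib

/-- The quasihyperbolic length of a path `γ` on `[a,b]` in a domain `Ω`:
`ℓ_k(γ) = ∫ₐᵇ ‖γ′(t)‖ / d(γ(t)) dt`, where `d(x) = dist(x, X ∖ Ω)`. -/
noncomputable def qhLength {X : Type*} [NormedAddCommGroup X] [NormedSpace ℝ X]
    (Ω : Set X) (γ : ℝ → X) (a b : ℝ) : ℝ :=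
  ∫ t in a..b, ‖deriv γ t‖ / Metric.infDist (γ t) Ωᶜ

/-- The quasihyperbolic distance on a domain `Ω`: the infimum of quasihyperbolic lengths
over continuously differentiable paths in `Ω` joining the two points. -/
noncomputable def qhDist {X : Type*} [NormedAddCommGroup X] [NormedSpace ℝ X]
    (Ω : Set X) (x y : X) : ℝ :=
  sInf ((fun γ : ℝ → X => qhLength Ω γ 0 1) ''
    {γ | ContDiff ℝ 1 γ ∧ Set.MapsTo γ (Set.Icc 0 1) Ω ∧ γ 0 = x ∧ γ 1 = y})

open Metric Set Filter intervalIntegral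

section Aux

variable {X : Type*} [NormedAddCommGroup X] [NormedSpace ℝ X]

/-- Distance to the complement is positive inside an open set. -/
lemma qh_dpos {Ω : Set X} (hΩopen : IsOpen Ω) (hne : Ωᶜ.Nonempty) {u : X} (hu : u ∈ Ω) :
    0 < Metric.infDist u Ωᶜ :=
  (hΩopen.isClosed_compl.notMem_iff_infDist_pos hne).1 (by simpa using hu)

/-- Points closer to `u` than `infDist u Ωᶜ` belong to `Ω`. -/
lemma qh_mem_of_dist_lt {Ω : Set X} {u w : X} (h : dist u w < Metric.infDist u Ωᶜ) : w ∈ Ω := by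
  by_contra hw
  exact absurd (Metric.infDist_le_dist_of_mem (show w ∈ Ωᶜ from hw)) (not_le.2 h)

/-- Concavity of the distance to the complement of a convex open set. -/
lemma qh_concave {Ω : Set X} (hΩopen : IsOpen Ω) (hΩconv : Convex ℝ Ω) (hne : Ωᶜ.Nonempty)
    {u v : X} (hu : u ∈ Ω) (hv : v ∈ Ω) {a b : ℝ} (ha : 0 ≤ a) (hb : 0 ≤ b) (hab : a + b = 1) :
    a * Metric.infDist u Ωᶜ + b * Metric.infDist v Ωᶜ
      ≤ Metric.infDist (a • u + b • v) Ωᶜ := by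
  set du := Metric.infDist u Ωᶜ with hdu
  set dv := Metric.infDist v Ωᶜ with hdv
  have hdu0 : 0 < du := qh_dpos hΩopen hne hu
  have hdv0 : 0 < dv := qh_dpos hΩopen hne hv
  set D := a * du + b * dv with hD
  have hD0 : 0 < D := by nlinarith [mul_le_mul_of_nonneg_left (min_le_left du dv) ha,
    mul_le_mul_of_nonneg_left (min_le_right du dv) hb, lt_min hdu0 hdv0]
  by_contra hlt
  push_neg at hlt
  obtain ⟨w, hw, hwd⟩ := (Metric.infDist_lt_iff hne).1 hlt
  set c := a • u + b • v with hc
  set z := w - c with hz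
  have hzn : ‖z‖ < D := by
    have : dist c w = ‖z‖ := by rw [dist_eq_norm, hz, ← norm_neg]; congr 1; abel
    linarith [this ▸ hwd]
  have h1 : u + (du / D) • z ∈ Ω := by
    apply qh_mem_of_dist_lt
    have : dist u (u + (du / D) • z) = (du / D) * ‖z‖ := by
      rw [dist_eq_norm]
      rw [show u - (u + (du / D) • z) = -((du / D) • z) by abel, norm_neg, norm_smul,
        Real.norm_eq_abs, abs_of_nonneg (le_of_lt (div_pos hdu0 hD0))]
    rw [this]
    calc (du / D) * ‖z‖ < (du / D) * D := by
          apply mul_lt_mul_of_pos_left hzn (div_pos hdu0 hD0)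
      _ = du := by field_simp
  have h2 : v + (dv / D) • z ∈ Ω := by
    apply qh_mem_of_dist_lt
    have : dist v (v + (dv / D) • z) = (dv / D) * ‖z‖ := by
      rw [dist_eq_norm]
      rw [show v - (v + (dv / D) • z) = -((dv / D) • z) by abel, norm_neg, norm_smul,
        Real.norm_eq_abs, abs_of_nonneg (le_of_lt (div_pos hdv0 hD0))]
    rw [this]
    calc (dv / D) * ‖z‖ < (dv / D) * D := by
          apply mul_lt_mul_of_pos_left hzn (div_pos hdv0 hD0)
      _ = dv := by field_simp
  have hwΩ : w ∈ Ω := by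
    have hcomb := hΩconv h1 h2 ha hb hab
    have : a • (u + (du / D) • z) + b • (v + (dv / D) • z) = w := by
      have h3 : a • ((du / D) • z) + b • ((dv / D) • z) = z := by
        rw [smul_smul, smul_smul, ← add_smul]
        have : a * (du / D) + b * (dv / D) = 1 := by field_simp [hD]; exact hD.symm
        rw [this, one_smul]
      calc a • (u + (du / D) • z) + b • (v + (dv / D) • z)
          = (a • u + b • v) + (a • ((du / D) • z) + b • ((dv / D) • z)) := by
            rw [smul_add, smul_add]; abel
        _ = c + z := by rw [h3, hc]
        _ = w := by rw [hz]; abel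
    rwa [this] at hcomb
  exact hw hwΩ

end Aux


/-- Reparametrization: a path of quasihyperbolic length at most `R` can be reparametrized so
that its pointwise quasihyperbolic speed is at most `R + ε`. -/
lemma qh_exists_tame {X : Type*} [NormedAddCommGroup X] [NormedSpace ℝ X]
    {Ω : Set X} (hΩopen : IsOpen Ω) (hne : Ωᶜ.Nonempty)
    {x y : X} {R ε : ℝ} (hε : 0 < ε) {γ : ℝ → X}
    (hγ : ContDiff ℝ 1 γ) (hmap : Set.MapsTo γ (Set.Icc 0 1) Ω) (h0 : γ 0 = x) (h1 : γ 1 = y)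
    (hlen : qhLength Ω γ 0 1 ≤ R) :
    ∃ σ : ℝ → X, ContDiff ℝ 1 σ ∧ Set.MapsTo σ (Set.Icc 0 1) Ω ∧ σ 0 = x ∧ σ 1 = y ∧
      ∀ s ∈ Set.Icc (0:ℝ) 1, ‖deriv σ s‖ / Metric.infDist (σ s) Ωᶜ ≤ R + ε := by
  -- the clamp function
  set c : ℝ → ℝ := fun t => max 0 (min 1 t) with hcdef
  have hc : Continuous c := continuous_const.max (continuous_const.min continuous_id)
  have hcmem : ∀ t, c t ∈ Set.Icc (0:ℝ) 1 :=
    fun t => ⟨le_max_left _ _, max_le zero_le_one (min_le_left _ _)⟩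
  have hceq : ∀ t ∈ Set.Icc (0:ℝ) 1, c t = t := by
    intro t ht
    simp [hcdef, min_eq_right ht.2, max_eq_right ht.1]
  have hγd : Continuous (deriv γ) := hγ.continuous_deriv le_rfl
  have hγc : Continuous γ := hγ.continuous
  -- the (shifted, clamped) speed function
  have hdc : Continuous (fun t => Metric.infDist (γ (c t)) Ωᶜ) :=
    (Metric.continuous_infDist_pt _).comp (hγc.comp hc)
  have hdpos : ∀ t, 0 < Metric.infDist (γ (c t)) Ωᶜ :=
    fun t => qh_dpos hΩopen hne (hmap (hcmem t))
  set g : ℝ → ℝ := fun t => ‖deriv γ (c t)‖ / Metric.infDist (γ (c t)) Ωᶜ + ε with hgdef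
  have hgc : Continuous g :=
    (((hγd.comp hc).norm).div hdc fun t => (hdpos t).ne').add continuous_const
  have hgε : ∀ t, ε ≤ g t := fun t => by
    have : (0:ℝ) ≤ ‖deriv γ (c t)‖ / Metric.infDist (γ (c t)) Ωᶜ :=
      div_nonneg (norm_nonneg _) Metric.infDist_nonneg
    simp only [hgdef]; linarith
  have hgpos : ∀ t, 0 < g t := fun t => lt_of_lt_of_le hε (hgε t)
  -- the primitive H and its inverse φ
  set H : ℝ → ℝ := fun t => ∫ u in (0:ℝ)..t, g u with hHdef
  have hH : ∀ t, HasDerivAt H (g t) t := fun t => (hgc.integral_hasStrictDerivAt 0 t).hasDerivAt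
  have hHc : Continuous H := continuous_iff_continuousAt.2 fun t => (hH t).continuousAt
  have hHmono : StrictMono H := strictMono_of_deriv_pos fun t => by
    rw [(hH t).deriv]; exact hgpos t
  have hHlin : ∀ t : ℝ, 0 ≤ t → ε * t ≤ H t := by
    intro t ht
    have h1 : (∫ u in (0:ℝ)..t, (ε:ℝ)) ≤ ∫ u in (0:ℝ)..t, g u :=
      intervalIntegral.integral_mono_on ht intervalIntegrable_const
        (hgc.intervalIntegrable 0 t) fun u _ => hgε u
    simpa [mul_comm] using h1
  have hHlin' : ∀ t : ℝ, t ≤ 0 → H t ≤ ε * t := by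
    intro t ht
    have h1 : (∫ u in t..(0:ℝ), (ε:ℝ)) ≤ ∫ u in t..(0:ℝ), g u :=
      intervalIntegral.integral_mono_on ht intervalIntegrable_const
        (hgc.intervalIntegrable t 0) fun u _ => hgε u
    have h2 : H t = -∫ u in t..(0:ℝ), g u := by
      rw [hHdef]; exact (intervalIntegral.integral_symm t 0)
    rw [h2]
    have : (∫ u in t..(0:ℝ), (ε:ℝ)) = -(ε * t) := by simp [mul_comm]
    linarith [this ▸ h1]
  have hHtop : Filter.Tendsto H Filter.atTop Filter.atTop := by
    apply Filter.tendsto_atTop_mono' _ _ (Filter.Tendsto.const_mul_atTop hε Filter.tendsto_id)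
    filter_upwards [Filter.eventually_ge_atTop (0:ℝ)] with t ht
    exact hHlin t ht
  have hHbot : Filter.Tendsto H Filter.atBot Filter.atBot := by
    apply Filter.tendsto_atBot_mono' _ _ (Filter.Tendsto.const_mul_atBot hε Filter.tendsto_id)
    filter_upwards [Filter.eventually_le_atBot (0:ℝ)] with t ht
    exact hHlin' t ht
  have hHsurj : Function.Surjective H := hHc.surjective hHtop hHbot
  set e := StrictMono.orderIsoOfSurjective H hHmono hHsurj with hedef
  set φ : ℝ → ℝ := fun z => e.symm z with hφdef
  have hφc : Continuous φ := e.symm.continuous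
  have hHφ : ∀ z, H (φ z) = z := fun z =>
    StrictMono.orderIsoOfSurjective_self_symm_apply H hHmono hHsurj z
  have hφH : ∀ t, φ (H t) = t := fun t =>
    StrictMono.orderIsoOfSurjective_symm_apply_self H hHmono hHsurj t
  have hφ : ∀ z, HasDerivAt φ (g (φ z))⁻¹ z := fun z =>
    HasDerivAt.of_local_left_inverse hφc.continuousAt (hH (φ z)) (hgpos (φ z)).ne'
      (Filter.Eventually.of_forall hHφ)
  have hφCD : ContDiff ℝ 1 φ := by
    rw [contDiff_one_iff_deriv]
    refine ⟨fun z => (hφ z).differentiableAt, ?_⟩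
    have : deriv φ = fun z => (g (φ z))⁻¹ := funext fun z => (hφ z).deriv
    rw [this]
    exact ((hgc.comp hφc).inv₀ fun z => (hgpos (φ z)).ne')
  have hφmono : Monotone φ := e.symm.monotone
  have hH0 : H 0 = 0 := by simp [hHdef]
  have hφ0 : φ 0 = 0 := by simpa [hH0] using hφH 0
  set M : ℝ := H 1 with hMdef
  have hφM : φ M = 1 := hφH 1
  have hM0 : 0 < M := by
    have h := hHlin 1 zero_le_one
    rw [mul_one] at h
    exact lt_of_lt_of_le hε h
  -- value of M
  have hMle : M ≤ R + ε := by
    have heq : (∫ u in (0:ℝ)..1, g u)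
        = (∫ u in (0:ℝ)..1, (‖deriv γ u‖ / Metric.infDist (γ u) Ωᶜ + ε)) := by
      apply intervalIntegral.integral_congr
      intro u hu
      rw [Set.uIcc_of_le zero_le_one] at hu
      simp only [hgdef, hceq u hu]
    have hint1 : IntervalIntegrable (fun u => ‖deriv γ u‖ / Metric.infDist (γ u) Ωᶜ)
        MeasureTheory.volume 0 1 := by
      apply ContinuousOn.intervalIntegrable
      rw [Set.uIcc_of_le zero_le_one]
      intro u hu
      have : c u = u := hceq u hu
      have h2 := ((((hγd.comp hc).norm).div hdc fun t => (hdpos t).ne')).continuousOn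
        (s := Set.Icc (0:ℝ) 1)
      have h3 := h2 u hu
      refine ContinuousWithinAt.congr h3 ?_ ?_
      · intro w hw; simp [hceq w hw]
      · simp [this]
    have hsum : (∫ u in (0:ℝ)..1, (‖deriv γ u‖ / Metric.infDist (γ u) Ωᶜ + ε))
        = qhLength Ω γ 0 1 + ε := by
      rw [intervalIntegral.integral_add hint1 intervalIntegrable_const]
      simp [qhLength]
    show (∫ u in (0:ℝ)..1, g u) ≤ R + ε
    rw [heq, hsum]
    linarith
  -- the reparametrized path
  refine ⟨fun s => γ (φ (M * s)), ?_, ?_, ?_, ?_, ?_⟩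
  · exact hγ.comp (hφCD.comp (contDiff_const.mul contDiff_id))
  · intro s hs
    apply hmap
    constructor
    · rw [← hφ0]; exact hφmono (mul_nonneg hM0.le hs.1)
    · rw [← hφM]; exact hφmono (by nlinarith [hs.2, hM0.le])
  · simp [hφ0, h0]
  · simp [hφM, h1]
  · intro s hs
    set τ := φ (M * s) with hτdef
    have hτmem : τ ∈ Set.Icc (0:ℝ) 1 := by
      constructor
      · rw [hτdef, ← hφ0]; exact hφmono (mul_nonneg hM0.le hs.1)
      · rw [hτdef, ← hφM]; exact hφmono (by nlinarith [hs.2, hM0.le])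
    have hcτ : c τ = τ := hceq τ hτmem
    -- derivative computation
    have hin : HasDerivAt (fun u : ℝ => M * u) M s := by
      simpa using (hasDerivAt_id s).const_mul M
    have hmid : HasDerivAt (fun u : ℝ => φ (M * u)) ((g τ)⁻¹ * M) s := by
      have := HasDerivAt.comp s (hφ (M * s)) hin
      exact this
    have hγτ : HasDerivAt γ (deriv γ τ) τ := (hγ.differentiable one_ne_zero τ).hasDerivAt
    have hd : HasDerivAt (fun u : ℝ => γ (φ (M * u))) (((g τ)⁻¹ * M) • deriv γ τ) s := by
      have := HasDerivAt.scomp (h := fun u : ℝ => φ (M * u)) (x := s)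
        (by rw [hτdef] at hγτ; exact hγτ) hmid
      exact this
    rw [hd.deriv]
    -- the estimate
    set d := Metric.infDist (γ τ) Ωᶜ with hddef
    have hd0 : 0 < d := qh_dpos hΩopen hne (hmap hτmem)
    set n := ‖deriv γ τ‖ with hndef
    have hn0 : 0 ≤ n := norm_nonneg _
    have hgτ : g τ = n / d + ε := by simp only [hgdef, hcτ, hndef, hddef]
    have hnorm : ‖((g τ)⁻¹ * M) • deriv γ τ‖ = (n / d + ε)⁻¹ * M * n := by
      rw [norm_smul, Real.norm_eq_abs, hgτ,
        abs_of_nonneg (mul_nonneg (inv_nonneg.2 (by positivity)) hM0.le)]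
    rw [hnorm]
    have hden : 0 < n / d + ε := by positivity
    have key : (n / d + ε)⁻¹ * M * n / d = M * (n / (n + ε * d)) := by
      have hne1 : n + ε * d ≠ 0 := by positivity
      field_simp
    rw [key]
    have h5 : n / (n + ε * d) ≤ 1 := by
      apply div_le_one_of_le₀ _ (by positivity)
      nlinarith
    calc M * (n / (n + ε * d)) ≤ M * 1 :=
          mul_le_mul_of_nonneg_left h5 hM0.le
      _ = M := mul_one M
      _ ≤ R + ε := hMle

/-- On a convex domain of a Banach space, every closed quasihyperbolic ball is convex. -/
theorem qhBall_convex_of_convex_domain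
    {X : Type*} [NormedAddCommGroup X] [NormedSpace ℝ X] [CompleteSpace X]
    (Ω : Set X) (hΩopen : IsOpen Ω) (hΩconn : IsConnected Ω) (hΩconv : Convex ℝ Ω)
    (hΩproper : Ω ≠ Set.univ)
    (x : X) (hx : x ∈ Ω) (r : ℝ) (hr : 0 < r) :
    Convex ℝ {y ∈ Ω | qhDist Ω x y ≤ r} := by
  have hne : Ωᶜ.Nonempty := Set.nonempty_compl.2 hΩproper
  -- straight-line paths and basic facts about the path sets
  have hpaths : ∀ z ∈ Ω,
      ((fun γ : ℝ → X => qhLength Ω γ 0 1) ''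
        {γ | ContDiff ℝ 1 γ ∧ Set.MapsTo γ (Set.Icc 0 1) Ω ∧ γ 0 = x ∧ γ 1 = z}).Nonempty := by
    intro z hz
    refine ⟨qhLength Ω (fun t : ℝ => x + t • (z - x)) 0 1,
      ⟨fun t : ℝ => x + t • (z - x), ⟨?_, ?_, by simp, by simp⟩, rfl⟩⟩
    · exact contDiff_const.add (contDiff_id.smul contDiff_const)
    · intro t ht
      show x + t • (z - x) ∈ Ω
      have heq : x + t • (z - x) = (1 - t) • x + t • z := by
        rw [sub_smul, one_smul, smul_sub]; abel
      rw [heq]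
      exact hΩconv hx hz (by linarith [ht.2]) ht.1 (by ring)
  have hbdd : ∀ z : X, BddBelow ((fun γ : ℝ → X => qhLength Ω γ 0 1) ''
      {γ | ContDiff ℝ 1 γ ∧ Set.MapsTo γ (Set.Icc 0 1) Ω ∧ γ 0 = x ∧ γ 1 = z}) := by
    intro z
    refine ⟨0, ?_⟩
    rintro l ⟨γ, -, rfl⟩
    exact intervalIntegral.integral_nonneg zero_le_one
      fun u _ => div_nonneg (norm_nonneg _) Metric.infDist_nonneg
  intro y₁ hy₁ y₂ hy₂ a b ha hb hab
  obtain ⟨hy₁Ω, hk₁⟩ := hy₁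
  obtain ⟨hy₂Ω, hk₂⟩ := hy₂
  have hyΩ : a • y₁ + b • y₂ ∈ Ω := hΩconv hy₁Ω hy₂Ω ha hb hab
  refine ⟨hyΩ, ?_⟩
  -- it suffices to bound the distance by r + ε for every positive ε
  have hsuff : ∀ ε : ℝ, 0 < ε → qhDist Ω x (a • y₁ + b • y₂) ≤ r + ε := by
    intro ε hε
    -- extract near-optimal paths
    have hget : ∀ z : X, z ∈ Ω → qhDist Ω x z ≤ r →
        ∃ σ : ℝ → X, ContDiff ℝ 1 σ ∧ Set.MapsTo σ (Set.Icc 0 1) Ω ∧ σ 0 = x ∧ σ 1 = z ∧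
          ∀ s ∈ Set.Icc (0:ℝ) 1, ‖deriv σ s‖ / Metric.infDist (σ s) Ωᶜ ≤ r + ε := by
      intro z hz hkz
      have hlt : sInf ((fun γ : ℝ → X => qhLength Ω γ 0 1) ''
          {γ | ContDiff ℝ 1 γ ∧ Set.MapsTo γ (Set.Icc 0 1) Ω ∧ γ 0 = x ∧ γ 1 = z})
          < r + ε / 2 := lt_of_le_of_lt hkz (by linarith)
      obtain ⟨l, ⟨γ, ⟨hγCD, hγmap, hγ0, hγ1⟩, rfl⟩, hl⟩ :=
        exists_lt_of_csInf_lt (hpaths z hz) hlt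
      have := qh_exists_tame hΩopen hne (R := r + ε / 2) (ε := ε / 2) (by linarith)
        hγCD hγmap hγ0 hγ1 hl.le
      obtain ⟨σ, h1, h2, h3, h4, h5⟩ := this
      refine ⟨σ, h1, h2, h3, h4, fun s hs => le_trans (h5 s hs) (by linarith)⟩
    obtain ⟨σ₁, hσ₁CD, hσ₁map, hσ₁0, hσ₁1, hσ₁pt⟩ := hget y₁ hy₁Ω hk₁
    obtain ⟨σ₂, hσ₂CD, hσ₂map, hσ₂0, hσ₂1, hσ₂pt⟩ := hget y₂ hy₂Ω hk₂
    -- combine the two paths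
    set σ : ℝ → X := fun s => a • σ₁ s + b • σ₂ s with hσdef
    have hσCD : ContDiff ℝ 1 σ := (hσ₁CD.const_smul a).add (hσ₂CD.const_smul b)
    have hσmap : Set.MapsTo σ (Set.Icc 0 1) Ω :=
      fun s hs => hΩconv (hσ₁map hs) (hσ₂map hs) ha hb hab
    have hσ0 : σ 0 = x := by
      simp only [hσdef, hσ₁0, hσ₂0, ← add_smul, hab, one_smul]
    have hσ1 : σ 1 = a • y₁ + b • y₂ := by
      simp only [hσdef, hσ₁1, hσ₂1]
    -- pointwise speed bound for the combined path
    have hσpt : ∀ s ∈ Set.Icc (0:ℝ) 1,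
        ‖deriv σ s‖ / Metric.infDist (σ s) Ωᶜ ≤ r + ε := by
      intro s hs
      have hd₁ : HasDerivAt σ₁ (deriv σ₁ s) s := (hσ₁CD.differentiable one_ne_zero s).hasDerivAt
      have hd₂ : HasDerivAt σ₂ (deriv σ₂ s) s := (hσ₂CD.differentiable one_ne_zero s).hasDerivAt
      have hd : HasDerivAt σ (a • deriv σ₁ s + b • deriv σ₂ s) s :=
        (hd₁.const_smul a).add (hd₂.const_smul b)
      rw [hd.deriv]
      set d₁ := Metric.infDist (σ₁ s) Ωᶜ with hd₁def
      set d₂ := Metric.infDist (σ₂ s) Ωᶜ with hd₂def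
      have hd₁0 : 0 < d₁ := qh_dpos hΩopen hne (hσ₁map hs)
      have hd₂0 : 0 < d₂ := qh_dpos hΩopen hne (hσ₂map hs)
      have hD0 : 0 < a * d₁ + b * d₂ := by
        nlinarith [mul_le_mul_of_nonneg_left (min_le_left d₁ d₂) ha,
          mul_le_mul_of_nonneg_left (min_le_right d₁ d₂) hb, lt_min hd₁0 hd₂0]
      have hconc : a * d₁ + b * d₂ ≤ Metric.infDist (σ s) Ωᶜ :=
        qh_concave hΩopen hΩconv hne (hσ₁map hs) (hσ₂map hs) ha hb hab
      have hdσ0 : 0 < Metric.infDist (σ s) Ωᶜ := lt_of_lt_of_le hD0 hconc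
      have hnum : ‖a • deriv σ₁ s + b • deriv σ₂ s‖
          ≤ a * ‖deriv σ₁ s‖ + b * ‖deriv σ₂ s‖ := by
        refine le_trans (norm_add_le _ _) ?_
        rw [norm_smul, norm_smul, Real.norm_eq_abs, Real.norm_eq_abs,
          abs_of_nonneg ha, abs_of_nonneg hb]
      have hb₁ : ‖deriv σ₁ s‖ ≤ (r + ε) * d₁ := (div_le_iff₀ hd₁0).1 (hσ₁pt s hs)
      have hb₂ : ‖deriv σ₂ s‖ ≤ (r + ε) * d₂ := (div_le_iff₀ hd₂0).1 (hσ₂pt s hs)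
      rw [div_le_iff₀ hdσ0]
      have hrε : (0:ℝ) ≤ r + ε := by linarith
      calc ‖a • deriv σ₁ s + b • deriv σ₂ s‖
          ≤ a * ‖deriv σ₁ s‖ + b * ‖deriv σ₂ s‖ := hnum
        _ ≤ a * ((r + ε) * d₁) + b * ((r + ε) * d₂) := by
            exact add_le_add (mul_le_mul_of_nonneg_left hb₁ ha)
              (mul_le_mul_of_nonneg_left hb₂ hb)
        _ = (r + ε) * (a * d₁ + b * d₂) := by ring
        _ ≤ (r + ε) * Metric.infDist (σ s) Ωᶜ :=
            mul_le_mul_of_nonneg_left hconc hrε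
    -- the combined path has quasihyperbolic length at most r + ε
    have hlenσ : qhLength Ω σ 0 1 ≤ r + ε := by
      have hint : IntervalIntegrable
          (fun s => ‖deriv σ s‖ / Metric.infDist (σ s) Ωᶜ) MeasureTheory.volume 0 1 := by
        apply ContinuousOn.intervalIntegrable
        rw [Set.uIcc_of_le zero_le_one]
        apply ContinuousOn.div
        · exact (hσCD.continuous_deriv le_rfl).norm.continuousOn
        · exact ((Metric.continuous_infDist_pt _).comp hσCD.continuous).continuousOn
        · intro s hs
          exact (qh_dpos hΩopen hne (hσmap hs)).ne'
      calc qhLength Ω σ 0 1 ≤ ∫ s in (0:ℝ)..1, (r + ε) :=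
            intervalIntegral.integral_mono_on zero_le_one hint
              intervalIntegrable_const hσpt
        _ = r + ε := by simp
    calc qhDist Ω x (a • y₁ + b • y₂)
        ≤ qhLength Ω σ 0 1 :=
          csInf_le (hbdd _) ⟨σ, ⟨hσCD, hσmap, hσ0, hσ1⟩, rfl⟩
      _ ≤ r + ε := hlenσ
  by_contra hcon
  push_neg at hcon
  have := hsuff ((qhDist Ω x (a • y₁ + b • y₂) - r) / 2) (by linarith)
  linarith
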